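/- Let ω ⊂ ℝ² be a bounded measurable set of positive Lebesgue measure, Ω := ω × (−1/2, 1/2), H := L²(Ω; Sym₃), and let 𝓛 := { S ∈ H : there exist A, B ∈ L²(ω; Sym₂) such that S_{αβ}(x₁,x₂,x₃) = A_{αβ}(x₁,x₂) + x₃B_{αβ}(x₁,x₂) for a.e. x and all α,β ∈ {1,2} }. Then Σ ∈ H belongs to the orthogonal complement 𝓛⊥ if and only if Σ_{i3} = 0 a.e. in Ω for i = 1,2,3 and Σᴺ_{αβ} = Σᴹ_{αβ} = 0 a.e. in ω for all α,β ∈ {1,2}, where Σᴺ_{αβ}(x₁,x₂) := ∫_{−1/2}^{1/2} Σ_{αβ}(x₁,x₂,t) dt and Σᴹ_{αβ}(x₁,x₂) := ∫_{−1/2}^{1/2} t·Σ_{αβ}(x₁,x₂,t) dt. -/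

import Mathlib

open Matrix MeasureTheory
open scoped RealInnerProductSpace

noncomputable section

/-- Points of the mid-plane `ℝ²`. -/
abbrev P2 := ℝ × ℝ

/-- Points of `ℝ³ = ℝ² × ℝ`. -/
abbrev Pt := P2 × ℝ

/-- Matrices `3×3` encoded as `EuclideanSpace` over the index pairs, so that the
`L²`-inner product is the integrated Frobenius inner product. -/
abbrev E9 := EuclideanSpace ℝ (Fin 3 × Fin 3)

/-- The interval `(−1/2, 1/2)`. -/
def Ioo2 : Set ℝ := Set.Ioo (-(1:ℝ)/2) (1/2)

/-- The plate `Ω := ω × (−1/2, 1/2)`. -/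
def dom (ω : Set P2) : Set Pt := ω ×ˢ Ioo2

/-- Lebesgue measure restricted to the plate `Ω`. -/
def meas (ω : Set P2) : Measure Pt := volume.restrict (dom ω)

/-- `H = L²(Ω; Sym₃)`: the a.e. symmetric elements of `L²(Ω; ℝ^{3×3})`. -/
def Hset (ω : Set P2) : Set (Lp E9 2 (meas ω)) :=
  {f | ∀ᵐ x ∂(meas ω), ∀ i j : Fin 3, f x (i, j) = f x (j, i)}

/-- `𝓛`: elements of `H` whose in-plane `2×2` block is affine in `x₃`, with coefficients
`A, B ∈ L²(ω; Sym₂)`. -/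
def Lset (ω : Set P2) : Set (Lp E9 2 (meas ω)) :=
  {f | f ∈ Hset ω ∧ ∃ A B : P2 → EuclideanSpace ℝ (Fin 2 × Fin 2),
    MemLp A 2 (volume.restrict ω) ∧ MemLp B 2 (volume.restrict ω) ∧
    (∀ᵐ y ∂(volume.restrict ω), ∀ α β : Fin 2,
      A y (α, β) = A y (β, α) ∧ B y (α, β) = B y (β, α)) ∧
    (∀ᵐ x ∂(meas ω), ∀ α β : Fin 2,
      f x (α.castSucc, β.castSucc) = A x.1 (α, β) + x.2 * B x.1 (α, β))}

/-! ### Auxiliary material -/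

lemma castSucc_ne_two (α : Fin 2) : α.castSucc ≠ (2 : Fin 3) :=
  ne_of_lt (Fin.castSucc_lt_last α)

/-- The linear "out-of-plane symmetrizer". -/
def symOut : E9 →ₗ[ℝ] E9 where
  toFun v := WithLp.toLp 2 (fun p => if p.1 = 2 ∨ p.2 = 2 then v p + v (p.2, p.1) else 0)
  map_add' u v := PiLp.ext fun p => by
    by_cases h : p.1 = 2 ∨ p.2 = 2 <;> simp [h] <;> ring
  map_smul' c v := PiLp.ext fun p => by
    by_cases h : p.1 = 2 ∨ p.2 = 2 <;> simp [h] <;> ring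

def symOutL : E9 →L[ℝ] E9 := LinearMap.toContinuousLinearMap symOut

lemma symOutL_apply (v : E9) (p : Fin 3 × Fin 3) :
    symOutL v p = if p.1 = 2 ∨ p.2 = 2 then v p + v (p.2, p.1) else 0 := rfl

/-- Two-entry indicator matrix. -/
def cmat {ι : Type*} [DecidableEq ι] (a b : ι) : EuclideanSpace ℝ ι :=
  WithLp.toLp 2 (fun p => (if p = a then (1:ℝ) else 0) + (if p = b then 1 else 0))

lemma cmat_swap {ι : Type*} [DecidableEq ι] (α β i j : ι) :
    cmat (α, β) (β, α) (i, j) = cmat (α, β) (β, α) (j, i) := by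
  simp only [cmat, PiLp.toLp_apply, Prod.mk.injEq]
  rw [add_comm]
  congr 1 <;> exact if_congr and_comm rfl rfl

lemma cmat_castSucc (α β α' β' : Fin 2) :
    cmat (α.castSucc, β.castSucc) (β.castSucc, α.castSucc) (α'.castSucc, β'.castSucc)
      = cmat (α, β) (β, α) (α', β') := by
  simp [cmat, Prod.mk.injEq, Fin.castSucc_inj]

lemma sum_mul_smul_cmat (v : E9) (a b : Fin 3 × Fin 3) (r : ℝ) :
    ∑ p : Fin 3 × Fin 3, v p * (r • cmat a b) p = r * (v a + v b) := by
  simp [cmat, PiLp.smul_apply, mul_add, Finset.sum_add_distrib, mul_ite, Finset.sum_ite_eq']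
  ring

/-- Pointwise reduction of the Frobenius product to the in-plane block. -/
lemma sum_eq_block (S W : E9) (A B : EuclideanSpace ℝ (Fin 2 × Fin 2)) (t : ℝ)
    (hs : ∀ i j : Fin 3, S (i,j) = S (j,i)) (h0 : ∀ i : Fin 3, S (i, 2) = 0)
    (hb : ∀ α β : Fin 2, W (α.castSucc, β.castSucc) = A (α,β) + t * B (α,β)) :
    ∑ p : Fin 3 × Fin 3, S p * W p
      = ∑ q : Fin 2 × Fin 2, S (q.1.castSucc, q.2.castSucc) * (A q + t * B q) := by
  have h20 : S (2, 0) = 0 := (hs 2 0).trans (h0 0)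
  have h21 : S (2, 1) = 0 := (hs 2 1).trans (h0 1)
  have hb00 := hb 0 0; have hb01 := hb 0 1; have hb10 := hb 1 0; have hb11 := hb 1 1
  simp only [Fin.castSucc_zero, Fin.castSucc_one] at hb00 hb01 hb10 hb11
  rw [Fintype.sum_prod_type, Fintype.sum_prod_type]
  rw [Fin.sum_univ_three]
  simp only [Fin.sum_univ_three, Fin.sum_univ_two, h0 0, h0 1, h0 2, h20, h21,
    Fin.castSucc_zero, Fin.castSucc_one, hb00, hb01, hb10, hb11]
  ring

/-- From vanishing of all tested integrals to a.e. vanishing of the fiberwise integral. -/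
lemma post {ν : Measure P2} {lam : Measure ℝ} [IsFiniteMeasure ν] [IsFiniteMeasure lam]
    (F : Pt → ℝ) (hF : Integrable F (ν.prod lam))
    (h : ∀ s : Set P2, MeasurableSet s →
      ∫ x, (s.indicator (fun _ => (1:ℝ)) x.1) * (2 * F x) ∂(ν.prod lam) = 0) :
    (fun y => ∫ t, F (y, t) ∂lam) =ᵐ[ν] 0 := by
  refine Integrable.ae_eq_zero_of_forall_setIntegral_eq_zero hF.integral_prod_left ?_
  intro s hsm _
  have hint : Integrable (fun x : Pt => (s.indicator (fun _ => (1:ℝ)) x.1) * (2 * F x))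
      (ν.prod lam) := by
    refine (hF.const_mul 2).bdd_mul (c := 1)
      ((measurable_one.indicator hsm).comp measurable_fst).aestronglyMeasurable ?_
    refine Filter.Eventually.of_forall fun x => ?_
    by_cases hx : x.1 ∈ s <;> simp [Set.indicator_apply, hx]
  have h0 := h s hsm
  rw [integral_prod _ hint] at h0
  have heq : ∀ y, (∫ t, (s.indicator (fun _ => (1:ℝ)) y) * (2 * F (y, t)) ∂lam)
      = s.indicator (fun y => 2 * ∫ t, F (y, t) ∂lam) y := by
    intro y
    rw [integral_const_mul]
    by_cases hy : y ∈ s <;> simp [Set.indicator_apply, hy, integral_const_mul]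
  simp_rw [heq] at h0
  rw [integral_indicator hsm, integral_const_mul] at h0
  linarith

/-- Let `ω ⊂ ℝ²` be bounded, measurable, of positive measure,
`Ω := ω × (−1/2,1/2)`, `H := L²(Ω; Sym₃)` and `𝓛` as above.  Then `Σ ∈ H` belongs to
`𝓛⊥` if and only if `Σ_{i3} = 0` a.e. in `Ω` for `i = 1,2,3` and the zeroth and first
`x₃`-moments `Σᴺ_{αβ}`, `Σᴹ_{αβ}` vanish a.e. in `ω` for all `α, β ∈ {1,2}`. -/
theorem mem_orthogonal_iff_moments_vanish
    (ω : Set P2) (hmeas : MeasurableSet ω) (hbdd : Bornology.IsBounded ω)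
    (hpos : 0 < volume ω) :
    ∀ S ∈ Hset ω,
      ((∀ w ∈ Lset ω, ⟪S, w⟫ = 0) ↔
        ((∀ᵐ x ∂(meas ω), ∀ i : Fin 3, S x (i, (2 : Fin 3)) = 0)
          ∧ ∀ α β : Fin 2, ∀ᵐ y ∂(volume.restrict ω),
              (∫ t in Ioo2, S (y, t) (α.castSucc, β.castSucc)) = 0
              ∧ (∫ t in Ioo2, t * S (y, t) (α.castSucc, β.castSucc)) = 0)) := by
  intro S hS
  classical
  obtain ⟨f, hf⟩ : ∃ f : Pt → E9, f = ⇑S := ⟨_, rfl⟩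
  rw [← hf]
  replace hS : ∀ᵐ x ∂(meas ω), ∀ i j : Fin 3, f x (i, j) = f x (j, i) := by
    rw [hf]; exact hS
  have hIoo : MeasurableSet Ioo2 := measurableSet_Ioo
  have hdom : MeasurableSet (dom ω) := hmeas.prod hIoo
  set ν : Measure P2 := volume.restrict ω with hν
  set lam : Measure ℝ := volume.restrict Ioo2 with hlam
  have hprod : meas ω = ν.prod lam := by
    rw [hν, hlam, Measure.prod_restrict, meas, dom, ← Measure.volume_eq_prod]
  haveI : IsFiniteMeasure ν :=
    ⟨by rw [hν, Measure.restrict_apply_univ]; exact hbdd.measure_lt_top⟩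
  haveI : IsFiniteMeasure lam :=
    ⟨by rw [hlam, Measure.restrict_apply_univ, Ioo2, Real.volume_Ioo]; exact ENNReal.ofReal_lt_top⟩
  haveI : IsFiniteMeasure (meas ω) := by rw [hprod]; infer_instance
  have hip : ∀ w : Lp E9 2 (meas ω),
      ⟪S, w⟫ = ∫ x, ∑ p : Fin 3 × Fin 3, f x p * w x p ∂(meas ω) := by
    intro w
    rw [L2.inner_def]
    refine integral_congr_ae (Filter.Eventually.of_forall fun x => ?_)
    simp [hf, PiLp.inner_apply, RCLike.inner_apply, mul_comm]
  have hipInt : ∀ w : Lp E9 2 (meas ω),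
      Integrable (fun x => ∑ p : Fin 3 × Fin 3, f x p * w x p) (meas ω) := by
    intro w
    refine (L2.integrable_inner (𝕜 := ℝ) S w).congr
      (Filter.Eventually.of_forall fun x => ?_)
    simp [hf, PiLp.inner_apply, RCLike.inner_apply, mul_comm]
  have hfL2 : MemLp f 2 (meas ω) := by rw [hf]; exact Lp.memLp S
  have hfInt : Integrable f (meas ω) := hfL2.integrable (by norm_num)
  have hcomp : ∀ p : Fin 3 × Fin 3, Integrable (fun x => f x p) (ν.prod lam) := by
    intro p
    have h1 := (EuclideanSpace.proj p : E9 →L[ℝ] ℝ).integrable_comp hfInt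
    rwa [hprod] at h1
  have haeIoo0 : ∀ᵐ x ∂(meas ω), x.2 ∈ Ioo2 :=
    (ae_restrict_mem hdom).mono fun x hx => hx.2
  have haeIoo : ∀ᵐ x ∂(ν.prod lam), x.2 ∈ Ioo2 := by rwa [hprod] at haeIoo0
  have hbd2 : ∀ x : Pt, x.2 ∈ Ioo2 → ‖x.2‖ ≤ 1/2 := by
    intro x hx
    rw [Real.norm_eq_abs, abs_le]
    exact ⟨by linarith [hx.1], le_of_lt hx.2⟩
  have hcomp2 : ∀ p : Fin 3 × Fin 3,
      Integrable (fun x : Pt => x.2 * f x p) (ν.prod lam) := fun p =>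
    (hcomp p).bdd_mul (c := 1/2) continuous_snd.aestronglyMeasurable
      (haeIoo.mono fun x hx => hbd2 x hx)
  constructor
  · -- forward direction
    intro horth
    constructor
    · -- out-of-plane entries vanish
      have hg : MemLp (fun x => symOutL (f x)) 2 (meas ω) := symOutL.comp_memLp' hfL2
      set w : Lp E9 2 (meas ω) := hg.toLp _ with hw
      have hwL : w ∈ Lset ω := by
        refine ⟨?_, fun _ => 0, fun _ => 0, MemLp.zero', MemLp.zero', ?_, ?_⟩
        · filter_upwards [hg.coeFn_toLp] with x hx i j
          rw [hx]
          show symOutL (f x) (i, j) = symOutL (f x) (j, i)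
          rw [symOutL_apply, symOutL_apply]
          by_cases h : i = 2 ∨ j = 2
          · rw [if_pos h, if_pos h.symm]
            exact add_comm _ _
          · rw [if_neg h, if_neg fun hc => h hc.symm]
        · exact Filter.Eventually.of_forall fun y α β => by simp
        · filter_upwards [hg.coeFn_toLp] with x hx α β
          rw [hx]
          show symOutL (f x) _ = _
          rw [symOutL_apply, if_neg]
          · simp
          · push_neg
            exact ⟨castSucc_ne_two α, castSucc_ne_two β⟩
      have h0 := (hip w).symm.trans (horth w hwL)
      have hae : (fun x => ∑ p : Fin 3 × Fin 3, f x p * w x p) =ᵐ[meas ω]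
          (fun x => ∑ p : Fin 3 × Fin 3,
            if p.1 = 2 ∨ p.2 = 2 then 2 * f x p ^ 2 else 0) := by
        filter_upwards [hg.coeFn_toLp, hS] with x hx hsym
        refine Finset.sum_congr rfl fun p _ => ?_
        rw [hx]
        show f x p * symOutL (f x) p = _
        rw [symOutL_apply]
        by_cases h : p.1 = 2 ∨ p.2 = 2
        · rw [if_pos h, if_pos h, hsym p.2 p.1]
          have hpp : f x (p.1, p.2) = f x p := rfl
          rw [hpp]; ring
        · rw [if_neg h, if_neg h, mul_zero]
      have hnn : ∀ x (p : Fin 3 × Fin 3),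
          0 ≤ (if p.1 = 2 ∨ p.2 = 2 then 2 * f x p ^ 2 else 0) := by
        intro x p
        by_cases h : p.1 = 2 ∨ p.2 = 2
        · rw [if_pos h]; positivity
        · rw [if_neg h]
      have hzero : (fun x => ∑ p : Fin 3 × Fin 3,
          if p.1 = 2 ∨ p.2 = 2 then 2 * f x p ^ 2 else 0) =ᵐ[meas ω] 0 := by
        refine (integral_eq_zero_iff_of_nonneg_ae ?_ ?_).mp ?_
        · refine Filter.Eventually.of_forall fun x => ?_
          simp only [Pi.zero_apply]
          exact Finset.sum_nonneg fun p _ => hnn x p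
        · exact (hipInt w).congr hae
        · rw [← integral_congr_ae hae, ← h0]
      filter_upwards [hzero] with x hx i
      simp only [Pi.zero_apply] at hx
      have h2 := (Finset.sum_eq_zero_iff_of_nonneg fun p _ => hnn x p).mp hx (i, 2)
        (Finset.mem_univ _)
      rw [if_pos (Or.inr rfl)] at h2
      have h3 : f x (i, 2) ^ 2 = 0 := by linarith
      exact pow_eq_zero_iff (two_ne_zero) |>.mp h3
    · -- moments vanish
      intro α β
      set a : Fin 3 × Fin 3 := (α.castSucc, β.castSucc) with ha
      set b : Fin 3 × Fin 3 := (β.castSucc, α.castSucc) with hb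
      have hN : (fun y => ∫ t, f (y, t) a ∂lam) =ᵐ[ν] 0 := by
        refine post _ (hcomp a) ?_
        intro s hsm
        set φ : P2 → ℝ := s.indicator (fun _ => (1:ℝ)) with hφ
        have hφm : Measurable φ := measurable_one.indicator hsm
        have hφb : ∀ y, ‖φ y‖ ≤ 1 := by
          intro y; by_cases h : y ∈ s <;> simp [hφ, Set.indicator_apply, h]
        have hφ2 : MemLp (fun x : Pt => φ x.1) 2 (meas ω) :=
          MemLp.of_bound (hφm.comp measurable_fst).aestronglyMeasurable 1
            (Filter.Eventually.of_forall fun x => hφb x.1)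
        have hg : MemLp (fun x : Pt => φ x.1 • cmat a b) 2 (meas ω) :=
          ((ContinuousLinearMap.id ℝ ℝ).smulRight (cmat a b)).comp_memLp' hφ2
        set w : Lp E9 2 (meas ω) := hg.toLp _ with hw
        have hφν : MemLp φ 2 ν :=
          MemLp.of_bound hφm.aestronglyMeasurable 1 (Filter.Eventually.of_forall hφb)
        have hwL : w ∈ Lset ω := by
          refine ⟨?_, fun y => φ y • cmat (α, β) (β, α), fun _ => 0,
            ((ContinuousLinearMap.id ℝ ℝ).smulRight (cmat (α, β) (β, α))).comp_memLp' hφν,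
            MemLp.zero', ?_, ?_⟩
          · filter_upwards [hg.coeFn_toLp] with x hx i j
            rw [hx]
            show (φ x.1 • cmat a b) (i, j) = (φ x.1 • cmat a b) (j, i)
            simp only [PiLp.smul_apply, smul_eq_mul, ha, hb]
            rw [cmat_swap]
          · refine Filter.Eventually.of_forall fun y α' β' => ?_
            refine ⟨?_, by simp⟩
            show φ y * cmat (α, β) (β, α) (α', β') = φ y * cmat (α, β) (β, α) (β', α')
            rw [cmat_swap]
          · filter_upwards [hg.coeFn_toLp] with x hx α' β'
            rw [hx]
            show (φ x.1 • cmat a b) (α'.castSucc, β'.castSucc) = _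
            simp only [PiLp.smul_apply, smul_eq_mul, ha, hb]
            rw [cmat_castSucc]
            show φ x.1 * cmat (α, β) (β, α) (α', β')
              = φ x.1 * cmat (α, β) (β, α) (α', β') + x.2 * (0 : EuclideanSpace ℝ (Fin 2 × Fin 2)) (α', β')
            simp
        have h0 := (hip w).symm.trans (horth w hwL)
        have hae : (fun x => ∑ p : Fin 3 × Fin 3, f x p * w x p) =ᵐ[meas ω]
            (fun x => φ x.1 * (2 * f x a)) := by
          filter_upwards [hg.coeFn_toLp, hS] with x hx hsym
          have hsum : ∑ p : Fin 3 × Fin 3, f x p * w x p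
              = ∑ p : Fin 3 × Fin 3, f x p * (φ x.1 • cmat a b) p :=
            Finset.sum_congr rfl fun p _ => by rw [hx]
          rw [hsum, sum_mul_smul_cmat]
          have hba : f x b = f x a := by rw [ha, hb]; exact hsym _ _
          rw [hba]; ring
        rw [integral_congr_ae hae] at h0
        have hmeq : ∫ x, φ x.1 * (2 * f x a) ∂(meas ω)
            = ∫ x, φ x.1 * (2 * f x a) ∂(ν.prod lam) := by rw [hprod]
        rw [hmeq] at h0
        exact h0
      have hM : (fun y => ∫ t, (fun x : Pt => x.2 * f x a) (y, t) ∂lam) =ᵐ[ν] 0 := by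
        refine post _ (hcomp2 a) ?_
        intro s hsm
        set φ : P2 → ℝ := s.indicator (fun _ => (1:ℝ)) with hφ
        have hφm : Measurable φ := measurable_one.indicator hsm
        have hφb : ∀ y, ‖φ y‖ ≤ 1 := by
          intro y; by_cases h : y ∈ s <;> simp [hφ, Set.indicator_apply, h]
        have hφ2 : MemLp (fun x : Pt => x.2 * φ x.1) 2 (meas ω) := by
          refine MemLp.of_bound
            (measurable_snd.mul (hφm.comp measurable_fst)).aestronglyMeasurable 1 ?_
          filter_upwards [haeIoo0] with x hx
          have h1 : ‖x.2‖ ≤ 1/2 := hbd2 x hx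
          have h2 : ‖φ x.1‖ ≤ 1 := hφb x.1
          rw [Real.norm_eq_abs, abs_mul]
          rw [Real.norm_eq_abs] at h1
          rw [Real.norm_eq_abs] at h2
          nlinarith [abs_nonneg x.2, abs_nonneg (φ x.1)]
        have hg : MemLp (fun x : Pt => (x.2 * φ x.1) • cmat a b) 2 (meas ω) :=
          ((ContinuousLinearMap.id ℝ ℝ).smulRight (cmat a b)).comp_memLp' hφ2
        set w : Lp E9 2 (meas ω) := hg.toLp _ with hw
        have hφν : MemLp φ 2 ν :=
          MemLp.of_bound hφm.aestronglyMeasurable 1 (Filter.Eventually.of_forall hφb)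
        have hwL : w ∈ Lset ω := by
          refine ⟨?_, fun _ => 0, fun y => φ y • cmat (α, β) (β, α),
            MemLp.zero',
            ((ContinuousLinearMap.id ℝ ℝ).smulRight (cmat (α, β) (β, α))).comp_memLp' hφν,
            ?_, ?_⟩
          · filter_upwards [hg.coeFn_toLp] with x hx i j
            rw [hx]
            show ((x.2 * φ x.1) • cmat a b) (i, j) = ((x.2 * φ x.1) • cmat a b) (j, i)
            simp only [PiLp.smul_apply, smul_eq_mul, ha, hb]
            rw [cmat_swap]
          · refine Filter.Eventually.of_forall fun y α' β' => ?_
            refine ⟨by simp, ?_⟩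
            show φ y * cmat (α, β) (β, α) (α', β') = φ y * cmat (α, β) (β, α) (β', α')
            rw [cmat_swap]
          · filter_upwards [hg.coeFn_toLp] with x hx α' β'
            rw [hx]
            show ((x.2 * φ x.1) • cmat a b) (α'.castSucc, β'.castSucc) = _
            simp only [PiLp.smul_apply, smul_eq_mul, ha, hb]
            rw [cmat_castSucc]
            show (x.2 * φ x.1) * cmat (α, β) (β, α) (α', β')
              = (0 : EuclideanSpace ℝ (Fin 2 × Fin 2)) (α', β')
                + x.2 * (φ x.1 * cmat (α, β) (β, α) (α', β'))
            have : (0 : EuclideanSpace ℝ (Fin 2 × Fin 2)) (α', β') = 0 := rfl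
            rw [this]; ring
        have h0 := (hip w).symm.trans (horth w hwL)
        have hae : (fun x => ∑ p : Fin 3 × Fin 3, f x p * w x p) =ᵐ[meas ω]
            (fun x => φ x.1 * (2 * (x.2 * f x a))) := by
          filter_upwards [hg.coeFn_toLp, hS] with x hx hsym
          have hsum : ∑ p : Fin 3 × Fin 3, f x p * w x p
              = ∑ p : Fin 3 × Fin 3, f x p * ((x.2 * φ x.1) • cmat a b) p :=
            Finset.sum_congr rfl fun p _ => by rw [hx]
          rw [hsum, sum_mul_smul_cmat]
          have hba : f x b = f x a := by rw [ha, hb]; exact hsym _ _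
          rw [hba]; ring
        rw [integral_congr_ae hae] at h0
        have hmeq : ∫ x, φ x.1 * (2 * (x.2 * f x a)) ∂(meas ω)
            = ∫ x, φ x.1 * (2 * (x.2 * f x a)) ∂(ν.prod lam) := by rw [hprod]
        rw [hmeq] at h0
        exact h0
      filter_upwards [hN, hM] with y h1 h2
      simp only [Pi.zero_apply] at h1 h2
      exact ⟨h1, h2⟩
  · -- reverse direction
    rintro ⟨h3, hmom⟩ w hw
    obtain ⟨hwH, A, B, hA, hB, hABsym, hblock⟩ := hw
    rw [hip w]
    have hae : (fun x => ∑ p : Fin 3 × Fin 3, f x p * w x p) =ᵐ[meas ω]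
        (fun x => ∑ q : Fin 2 × Fin 2,
          f x (q.1.castSucc, q.2.castSucc) * (A x.1 q + x.2 * B x.1 q)) := by
      filter_upwards [hS, h3, hblock] with x hsym h0 hbx
      exact sum_eq_block (f x) (w x) (A x.1) (B x.1) x.2 hsym h0 hbx
    rw [integral_congr_ae hae]
    have hint : Integrable (fun x : Pt => ∑ q : Fin 2 × Fin 2,
        f x (q.1.castSucc, q.2.castSucc) * (A x.1 q + x.2 * B x.1 q)) (ν.prod lam) := by
      have h1 := (hipInt w).congr hae
      rwa [hprod] at h1
    have hmeq : ∫ x, (∑ q : Fin 2 × Fin 2,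
          f x (q.1.castSucc, q.2.castSucc) * (A x.1 q + x.2 * B x.1 q)) ∂(meas ω)
        = ∫ x, (∑ q : Fin 2 × Fin 2,
          f x (q.1.castSucc, q.2.castSucc) * (A x.1 q + x.2 * B x.1 q)) ∂(ν.prod lam) := by
      rw [hprod]
    rw [hmeq, integral_prod _ hint]
    have hfib1 : ∀ᵐ y ∂ν, ∀ p : Fin 3 × Fin 3, Integrable (fun t => f (y, t) p) lam := by
      rw [ae_all_iff]; exact fun p => (hcomp p).prod_right_ae
    have hfib2 : ∀ᵐ y ∂ν, ∀ p : Fin 3 × Fin 3,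
        Integrable (fun t => t * f (y, t) p) lam := by
      rw [ae_all_iff]; exact fun p => (hcomp2 p).prod_right_ae
    have hmom' : ∀ᵐ y ∂ν, ∀ α β : Fin 2,
        (∫ t, f (y, t) (α.castSucc, β.castSucc) ∂lam) = 0
        ∧ (∫ t, t * f (y, t) (α.castSucc, β.castSucc) ∂lam) = 0 :=
      ae_all_iff.2 fun α => ae_all_iff.2 fun β => hmom α β
    have hz : (fun y => ∫ t, ∑ q : Fin 2 × Fin 2,
        f (y, t) (q.1.castSucc, q.2.castSucc) * (A y q + t * B y q) ∂lam) =ᵐ[ν] 0 := by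
      filter_upwards [hfib1, hfib2, hmom'] with y h1 h2 h3'
      simp only [Pi.zero_apply]
      have hcong : ∀ t : ℝ, (∑ q : Fin 2 × Fin 2,
          f (y, t) (q.1.castSucc, q.2.castSucc) * (A y q + t * B y q))
          = ∑ q : Fin 2 × Fin 2, (A y q * f (y, t) (q.1.castSucc, q.2.castSucc)
            + B y q * (t * f (y, t) (q.1.castSucc, q.2.castSucc))) :=
        fun t => Finset.sum_congr rfl fun q _ => by ring
      simp_rw [hcong]
      have hsplit := integral_finset_sum (μ := lam) Finset.univ
        (f := fun (q : Fin 2 × Fin 2) (t : ℝ) =>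
          A y q * f (y, t) (q.1.castSucc, q.2.castSucc)
            + B y q * (t * f (y, t) (q.1.castSucc, q.2.castSucc)))
        (fun q _ => ((h1 _).const_mul _).add ((h2 _).const_mul _))
      rw [hsplit]
      refine Finset.sum_eq_zero fun q _ => ?_
      rw [integral_add ((h1 _).const_mul _) ((h2 _).const_mul _), integral_const_mul,
        integral_const_mul, (h3' q.1 q.2).1, (h3' q.1 q.2).2]
      ring
    rw [integral_congr_ae hz]
    simp
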